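/- Let G be a group, let A_X and A_Y be finite alphabets, and let X ⊆ A_X^G and Y₀ ⊆ A_Y^G be nonempty subshifts. Let K, M, L ⊆ G be finite subsets with e ∈ K, K = K⁻¹, K ⊆ M, M = M⁻¹, M⁶ ⊆ L. Let ε > 0 and hX, hY ∈ ℝ satisfy |M⁶| < ε|L| and hX + ε + 5ε·log|A_X| < hY − ε − ε(5 + 4|K|⁶)·log|A_Y|. Let S₀ ⊆ G be a nonempty finite subset satisfying: |K³| · |M⁶| · |L| · |LS₀ \ S₀| < ε|S₀|; (1/|S₀|)·log|P(S₀,X)| < hX + ε; and (1/|S₀|)·log|P(S₀,Y₀)| > hY − ε. Let C ⊆ G be an L-separated subset, and let S₁, S₂ ⊆ G be finite subsets with S₁ ⊆ S₀ ∩ S₂, |S₀ \ S₁| < ε|S₀|, and |S₂ \ S₁| < 3ε|S₁|. Set S₁* = int_{K³}(S₁ \ M⁶C). Then |P(S₂, X)| < |P(S₁*, Y₀)|. -/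

import Mathlib

open Pointwise

/-- The shift action of a group `G` on `G → A`: `σ^g(x)(h) = x(hg)`. -/
def shiftMap {G A : Type*} [Group G] (g : G) (x : G → A) : G → A := fun h => x (h * g)

/-- A subshift: a closed, shift-invariant subset of the full shift `A^G`. -/
def IsSubshift {G A : Type*} [Group G] [TopologicalSpace A] (X : Set (G → A)) : Prop :=
  IsClosed X ∧ ∀ g : G, shiftMap g '' X = X

/-- `P(F, X)`: the set of patterns of shape `F` appearing in points of `X`,
i.e. the restrictions of points of `X` to `F`. -/
def patterns {G A : Type*} [Group G] (F : Finset G) (X : Set (G → A)) : Set (F → A) :=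
  (fun x => fun f : F => x ↑f) '' X

attribute [local instance] Classical.propDecidable



/-- The `K`-interior of a finite subset `F` of a group: `int_K F = {f ∈ F : Kf ⊆ F}`. -/
noncomputable def Finset.groupInterior {G : Type*} [Group G] [DecidableEq G]
    (K F : Finset G) : Finset G :=
  F.filter fun f => ∀ k ∈ K, k * f ∈ F

/-- A subset `C ⊆ G` is `L`-separated if the translates `Lc`, `c ∈ C`, are pairwise disjoint. -/
def LSeparated {G : Type*} [Group G] (L : Finset G) (C : Set G) : Prop :=
  ∀ c₁ ∈ C, ∀ c₂ ∈ C, c₁ ≠ c₂ → ((L : Set G) * {c₁}) ∩ ((L : Set G) * {c₂}) = ∅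

lemma aux_mem_inv_mul {G : Type*} [Group G] [DecidableEq G] {B T : Finset G} {k s : G}
    (hk : k ∈ B) (h : k * s ∈ T) : s ∈ B⁻¹ * T := by
  have := Finset.mul_mem_mul (Finset.inv_mem_inv hk) h
  simpa [inv_mul_cancel_left] using this

lemma patterns_finite {G A : Type*} [Group G] [Finite A] (F : Finset G) (X : Set (G → A)) :
    (patterns F X).Finite := Set.toFinite _

lemma patterns_ncard_pos {G A : Type*} [Group G] [Finite A] (F : Finset G) {X : Set (G → A)}
    (hX : X.Nonempty) : 0 < (patterns F X).ncard :=
  (Set.ncard_pos (patterns_finite F X)).2 (hX.image _)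

lemma patterns_ncard_mono {G A : Type*} [Group G] [Finite A] {F F' : Finset G} (h : F ⊆ F')
    (X : Set (G → A)) : (patterns F X).ncard ≤ (patterns F' X).ncard := by
  have himg : patterns F X = (fun (p : F' → A) (f : F) => p ⟨f, h f.2⟩) '' patterns F' X := by
    unfold patterns
    rw [Set.image_image]
  rw [himg]
  exact Set.ncard_image_le (patterns_finite F' X)

lemma ncard_prod_set {α β : Type*} (s : Set α) (t : Set β) :
    (s ×ˢ t).ncard = s.ncard * t.ncard := by
  rw [← Nat.card_coe_set_eq, ← Nat.card_coe_set_eq, ← Nat.card_coe_set_eq,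
    Nat.card_congr (Equiv.Set.prod s t), Nat.card_prod]

lemma patterns_ncard_le {G A : Type*} [Group G] [DecidableEq G] [Fintype A] {F F' : Finset G}
    (h : F ⊆ F') (X : Set (G → A)) :
    (patterns F' X).ncard ≤ (patterns F X).ncard * Fintype.card A ^ (F' \ F).card := by
  classical
  have hDsub : F' \ F ⊆ F' := Finset.sdiff_subset
  set Φ : (↥F' → A) → (↥F → A) × (↥(F' \ F) → A) :=
    fun p => (fun f => p ⟨f, h f.2⟩, fun f => p ⟨f, hDsub f.2⟩) with hΦ
  have hinj : Function.Injective Φ := by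
    intro p q hpq
    have h1 := congrArg Prod.fst hpq
    have h2 := congrArg Prod.snd hpq
    funext f
    by_cases hf : (f : G) ∈ F
    · exact congrFun h1 ⟨f, hf⟩
    · exact congrFun h2 ⟨f, Finset.mem_sdiff.2 ⟨f.2, hf⟩⟩
  have himg : Φ '' (patterns F' X) ⊆
      (patterns F X) ×ˢ (Set.univ : Set (↥(F' \ F) → A)) := by
    rintro _ ⟨p, hp, rfl⟩
    obtain ⟨x, hx, rfl⟩ := hp
    exact ⟨⟨x, hx, rfl⟩, trivial⟩
  calc (patterns F' X).ncard = (Φ '' (patterns F' X)).ncard :=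
        (Set.ncard_image_of_injective _ hinj).symm
    _ ≤ ((patterns F X) ×ˢ (Set.univ : Set (↥(F' \ F) → A))).ncard :=
        Set.ncard_le_ncard himg (Set.toFinite _)
    _ = (patterns F X).ncard * (Set.univ : Set (↥(F' \ F) → A)).ncard :=
        ncard_prod_set _ _
    _ = (patterns F X).ncard * Fintype.card A ^ (F' \ F).card := by
        rw [Set.ncard_univ, Nat.card_eq_fintype_card, Fintype.card_fun, Fintype.card_coe]

set_option maxHeartbeats 2000000 in
/-- (Block injection counting lemma.) Under the stated invariance and
entropy-counting conditions on the shapes `S₀ ⊇ S₁ ⊆ S₂` and the `L`-separated set `C`,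
setting `S₁* = int_{K³}(S₁ \ M⁶C)`, one has `|P(S₂, X)| < |P(S₁*, Y₀)|`. -/
theorem block_injection_count {G AX AY : Type*} [Group G] [DecidableEq G]
    [Fintype AX] [Nonempty AX] [TopologicalSpace AX] [DiscreteTopology AX]
    [Fintype AY] [Nonempty AY] [TopologicalSpace AY] [DiscreteTopology AY]
    (X : Set (G → AX)) (Y₀ : Set (G → AY))
    (hXsub : IsSubshift X) (hY₀sub : IsSubshift Y₀) (hXne : X.Nonempty) (hY₀ne : Y₀.Nonempty)
    (K M L : Finset G)
    (hK1 : (1 : G) ∈ K) (hKsymm : K⁻¹ = K) (hKM : K ⊆ M) (hMsymm : M⁻¹ = M)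
    (hM6L : (M ^ 6 : Finset G) ⊆ L)
    (ε : ℝ) (hε : 0 < ε) (hXe hYe : ℝ)
    (hM6εL : (((M ^ 6 : Finset G)).card : ℝ) < ε * L.card)
    (hgap : hXe + ε + 5 * ε * Real.log (Fintype.card AX)
      < hYe - ε - ε * (5 + 4 * (K.card : ℝ) ^ 6) * Real.log (Fintype.card AY))
    (S₀ : Finset G) (hS₀ne : S₀.Nonempty)
    (hS₀inv : (((K ^ 3 : Finset G)).card : ℝ) * ((M ^ 6 : Finset G)).card * L.card
        * (((L * S₀) \ S₀).card : ℝ) < ε * S₀.card)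
    (hS₀X : Real.log ((patterns S₀ X).ncard) / S₀.card < hXe + ε)
    (hS₀Y : hYe - ε < Real.log ((patterns S₀ Y₀).ncard) / S₀.card)
    (C : Set G) (hC : LSeparated L C)
    (S₁ S₂ : Finset G) (hS₁S₀ : S₁ ⊆ S₀) (hS₁S₂ : S₁ ⊆ S₂)
    (hS₀S₁ : (((S₀ \ S₁)).card : ℝ) < ε * S₀.card)
    (hS₂S₁ : (((S₂ \ S₁)).card : ℝ) < 3 * ε * S₁.card) :
    (patterns S₂ X).ncard <
      (patterns (Finset.groupInterior (K ^ 3)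
        (S₁.filter fun s => s ∉ ((M ^ 6 : Finset G) : Set G) * C)) Y₀).ncard := by
  classical
  -- basic membership facts
  have hM1 : (1 : G) ∈ M := hKM hK1
  have h1K3 : (1 : G) ∈ (K ^ 3 : Finset G) := Finset.one_mem_pow hK1
  have h1M6 : (1 : G) ∈ (M ^ 6 : Finset G) := Finset.one_mem_pow hM1
  have h1L : (1 : G) ∈ L := hM6L h1M6
  have hK3M6 : (K ^ 3 : Finset G) ⊆ (M ^ 6 : Finset G) :=
    Finset.pow_subset_pow hKM hM1 (by norm_num)
  have hK3L : (K ^ 3 : Finset G) ⊆ L := hK3M6.trans hM6L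
  have hK3inv : (K ^ 3 : Finset G)⁻¹ = K ^ 3 := by rw [← inv_pow, hKsymm]
  have hM6inv : (M ^ 6 : Finset G)⁻¹ = M ^ 6 := by rw [← inv_pow, hMsymm]
  -- abbreviations
  set T : Finset G := S₁.filter (fun s => s ∉ ((M ^ 6 : Finset G) : Set G) * C) with hTdef
  set Sstar : Finset G := Finset.groupInterior (K ^ 3) T with hSstardef
  set N3 : Finset G :=
    S₁.filter (fun s => ∃ k ∈ (K ^ 3 : Finset G), k * s ∈ ((M ^ 6 : Finset G) : Set G) * C)
    with hN3def
  set N4 : Finset G := S₁.filter (fun s => ∃ k ∈ (K ^ 3 : Finset G), k * s ∉ S₁) with hN4def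
  set Cfin : Finset G := ((M ^ 6 : Finset G) * ((K ^ 3 : Finset G) * S₁)).filter (fun c => c ∈ C)
    with hCfindef
  -- subset facts
  have hTS1 : T ⊆ S₁ := Finset.filter_subset _ _
  have hSstarT : Sstar ⊆ T := Finset.filter_subset _ _
  have hSstarS0 : Sstar ⊆ S₀ := (hSstarT.trans hTS1).trans hS₁S₀
  -- the covering of S₀ \ Sstar by bad sets
  have hcover : S₀ \ Sstar ⊆ ((S₀ \ S₁) ∪ N3) ∪ N4 := by
    intro s hs
    rw [Finset.mem_sdiff] at hs
    obtain ⟨hs0, hsn⟩ := hs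
    by_cases hs1 : s ∈ S₁
    · by_cases hsT : s ∈ T
      · have hnall : ¬ ∀ k ∈ (K ^ 3 : Finset G), k * s ∈ T := by
          intro hall
          exact hsn (Finset.mem_filter.2 ⟨hsT, hall⟩)
        push_neg at hnall
        obtain ⟨k, hk, hkT⟩ := hnall
        by_cases hkS1 : k * s ∈ S₁
        · have hkC : k * s ∈ ((M ^ 6 : Finset G) : Set G) * C := by
            by_contra hc
            exact hkT (Finset.mem_filter.2 ⟨hkS1, hc⟩)
          exact Finset.mem_union_left _ (Finset.mem_union_right _
            (Finset.mem_filter.2 ⟨hs1, k, hk, hkC⟩))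
        · exact Finset.mem_union_right _ (Finset.mem_filter.2 ⟨hs1, k, hk, hkS1⟩)
      · have hsC : s ∈ ((M ^ 6 : Finset G) : Set G) * C := by
          by_contra hc
          exact hsT (Finset.mem_filter.2 ⟨hs1, hc⟩)
        refine Finset.mem_union_left _ (Finset.mem_union_right _
          (Finset.mem_filter.2 ⟨hs1, 1, h1K3, ?_⟩))
        rwa [one_mul]
    · exact Finset.mem_union_left _ (Finset.mem_union_left _ (Finset.mem_sdiff.2 ⟨hs0, hs1⟩))
  -- bound on N3
  have hN3sub : N3 ⊆ (K ^ 3 : Finset G)⁻¹ * ((M ^ 6 : Finset G) * Cfin) := by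
    intro s hs
    rw [hN3def, Finset.mem_filter] at hs
    obtain ⟨hs1, k, hk, hkC⟩ := hs
    rw [Set.mem_mul] at hkC
    obtain ⟨m, hm, c, hcC, hmc⟩ := hkC
    have hm' : m ∈ (M ^ 6 : Finset G) := hm
    have hmcK : m * c ∈ (K ^ 3 : Finset G) * S₁ := by
      rw [hmc]; exact Finset.mul_mem_mul hk hs1
    have hcW : c ∈ (M ^ 6 : Finset G) * ((K ^ 3 : Finset G) * S₁) := by
      have := aux_mem_inv_mul hm' hmcK
      rwa [hM6inv] at this
    have hcCf : c ∈ Cfin := by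
      rw [hCfindef]; exact Finset.mem_filter.2 ⟨hcW, hcC⟩
    have hks : k * s ∈ (M ^ 6 : Finset G) * Cfin := by
      rw [← hmc]; exact Finset.mul_mem_mul hm' hcCf
    exact aux_mem_inv_mul hk hks
  have hN3card : N3.card ≤ (K ^ 3 : Finset G).card * ((M ^ 6 : Finset G).card * Cfin.card) := by
    calc N3.card ≤ ((K ^ 3 : Finset G)⁻¹ * ((M ^ 6 : Finset G) * Cfin)).card :=
          Finset.card_le_card hN3sub
      _ ≤ (K ^ 3 : Finset G)⁻¹.card * ((M ^ 6 : Finset G) * Cfin).card := Finset.card_mul_le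
      _ ≤ (K ^ 3 : Finset G).card * ((M ^ 6 : Finset G).card * Cfin.card) := by
          rw [Finset.card_inv]
          exact Nat.mul_le_mul_left _ Finset.card_mul_le
  -- disjointness of translates of elements of Cfin
  have hdisj : ∀ c₁ ∈ Cfin, ∀ c₂ ∈ Cfin, c₁ ≠ c₂ → Disjoint (L * {c₁}) (L * {c₂}) := by
    intro c₁ h1 c₂ h2 hne
    rw [hCfindef, Finset.mem_filter] at h1 h2
    have hE := hC c₁ h1.2 c₂ h2.2 hne
    rw [Finset.disjoint_left]
    intro x hx1 hx2
    have hx1' : x ∈ ((L : Set G) * {c₁}) := by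
      have : x ∈ ((L * {c₁} : Finset G) : Set G) := hx1
      rwa [Finset.coe_mul, Finset.coe_singleton] at this
    have hx2' : x ∈ ((L : Set G) * {c₂}) := by
      have : x ∈ ((L * {c₂} : Finset G) : Set G) := hx2
      rwa [Finset.coe_mul, Finset.coe_singleton] at this
    have : x ∈ ((L : Set G) * {c₁}) ∩ ((L : Set G) * {c₂}) := ⟨hx1', hx2'⟩
    rw [hE] at this
    exact absurd this (Set.notMem_empty x)
  -- |Cfin| * |L| ≤ |L * (M⁶ * (K³ * S₁))|
  have hCfinL : Cfin.card * L.card ≤ (L * ((M ^ 6 : Finset G) * ((K ^ 3 : Finset G) * S₁))).card := by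
    have hunion : Cfin.biUnion (fun c => L * {c}) ⊆
        L * ((M ^ 6 : Finset G) * ((K ^ 3 : Finset G) * S₁)) := by
      intro x hx
      rw [Finset.mem_biUnion] at hx
      obtain ⟨c, hc, hxc⟩ := hx
      have hc' : c ∈ (M ^ 6 : Finset G) * ((K ^ 3 : Finset G) * S₁) := by
        rw [hCfindef, Finset.mem_filter] at hc; exact hc.1
      exact Finset.mul_subset_mul_left (Finset.singleton_subset_iff.2 hc') hxc
    have hcard : (Cfin.biUnion (fun c => L * {c})).card = Cfin.card * L.card := by
      rw [Finset.card_biUnion hdisj]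
      simp only [Finset.card_mul_singleton]
      rw [Finset.sum_const, smul_eq_mul]
    rw [← hcard]
    exact Finset.card_le_card hunion
  -- expansion bounds
  have hexp : ∀ Tt : Finset G,
      ((L * Tt) \ S₀).card ≤ L.card * (Tt \ S₀).card + ((L * S₀) \ S₀).card := by
    intro Tt
    have hsub : (L * Tt) \ S₀ ⊆ (L * (Tt \ S₀)) ∪ ((L * S₀) \ S₀) := by
      intro x hx
      rw [Finset.mem_sdiff] at hx
      obtain ⟨hx1, hx2⟩ := hx
      rw [Finset.mem_mul] at hx1
      obtain ⟨l, hl, t, ht, hlt⟩ := hx1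
      by_cases htS : t ∈ S₀
      · refine Finset.mem_union_right _ (Finset.mem_sdiff.2 ⟨?_, hx2⟩)
        rw [← hlt]; exact Finset.mul_mem_mul hl htS
      · refine Finset.mem_union_left _ ?_
        rw [← hlt]; exact Finset.mul_mem_mul hl (Finset.mem_sdiff.2 ⟨ht, htS⟩)
    calc ((L * Tt) \ S₀).card ≤ ((L * (Tt \ S₀)) ∪ ((L * S₀) \ S₀)).card :=
          Finset.card_le_card hsub
      _ ≤ (L * (Tt \ S₀)).card + ((L * S₀) \ S₀).card := Finset.card_union_le _ _
      _ ≤ L.card * (Tt \ S₀).card + ((L * S₀) \ S₀).card :=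
          Nat.add_le_add_right Finset.card_mul_le _
  have hsplit : ∀ A : Finset G, A.card ≤ S₀.card + (A \ S₀).card := by
    intro A
    calc A.card ≤ (S₀ ∪ (A \ S₀)).card := Finset.card_le_card (fun x hx => by
          by_cases hxS : x ∈ S₀
          · exact Finset.mem_union_left _ hxS
          · exact Finset.mem_union_right _ (Finset.mem_sdiff.2 ⟨hx, hxS⟩))
      _ ≤ S₀.card + (A \ S₀).card := Finset.card_union_le _ _
  have hW3 : L * ((M ^ 6 : Finset G) * ((K ^ 3 : Finset G) * S₁)) ⊆ L * (L * (L * S₀)) :=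
    Finset.mul_subset_mul_left (Finset.mul_subset_mul hM6L (Finset.mul_subset_mul hK3L hS₁S₀))
  have hA2 : ((L * (L * S₀)) \ S₀).card ≤
      L.card * ((L * S₀) \ S₀).card + ((L * S₀) \ S₀).card := hexp (L * S₀)
  have hA3 : ((L * (L * (L * S₀))) \ S₀).card ≤
      L.card * (L.card * ((L * S₀) \ S₀).card + ((L * S₀) \ S₀).card) + ((L * S₀) \ S₀).card := by
    calc ((L * (L * (L * S₀))) \ S₀).card
        ≤ L.card * ((L * (L * S₀)) \ S₀).card + ((L * S₀) \ S₀).card := hexp (L * (L * S₀))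
      _ ≤ _ := Nat.add_le_add_right (Nat.mul_le_mul_left _ hA2) _
  have hA3' : (L * (L * (L * S₀))).card ≤ S₀.card +
      (L.card * (L.card * ((L * S₀) \ S₀).card + ((L * S₀) \ S₀).card) + ((L * S₀) \ S₀).card) :=
    (hsplit _).trans (Nat.add_le_add_left hA3 _)
  -- bound on N4
  have hN4sub : N4 ⊆ (K ^ 3 : Finset G)⁻¹ * (((K ^ 3 : Finset G) * S₁) \ S₁) := by
    intro s hs
    rw [hN4def, Finset.mem_filter] at hs
    obtain ⟨hs1, k, hk, hks⟩ := hs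
    refine aux_mem_inv_mul hk (Finset.mem_sdiff.2 ⟨Finset.mul_mem_mul hk hs1, hks⟩)
  have hN4b : ((K ^ 3 : Finset G) * S₁) \ S₁ ⊆ ((L * S₀) \ S₀) ∪ (S₀ \ S₁) := by
    intro x hx
    rw [Finset.mem_sdiff] at hx
    obtain ⟨hx1, hx2⟩ := hx
    by_cases hxS : x ∈ S₀
    · exact Finset.mem_union_right _ (Finset.mem_sdiff.2 ⟨hxS, hx2⟩)
    · refine Finset.mem_union_left _ (Finset.mem_sdiff.2 ⟨?_, hxS⟩)
      exact Finset.mul_subset_mul hK3L hS₁S₀ hx1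
  have hN4card : N4.card ≤
      (K ^ 3 : Finset G).card * (((L * S₀) \ S₀).card + (S₀ \ S₁).card) := by
    calc N4.card ≤ ((K ^ 3 : Finset G)⁻¹ * (((K ^ 3 : Finset G) * S₁) \ S₁)).card :=
          Finset.card_le_card hN4sub
      _ ≤ (K ^ 3 : Finset G)⁻¹.card * (((K ^ 3 : Finset G) * S₁) \ S₁).card := Finset.card_mul_le
      _ ≤ (K ^ 3 : Finset G).card * (((L * S₀) \ S₀).card + (S₀ \ S₁).card) := by
          rw [Finset.card_inv]
          exact Nat.mul_le_mul_left _ ((Finset.card_le_card hN4b).trans (Finset.card_union_le _ _))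
  -- cardinal of cover
  have hdstarN : (S₀ \ Sstar).card ≤ (S₀ \ S₁).card + N3.card + N4.card := by
    calc (S₀ \ Sstar).card ≤ (((S₀ \ S₁) ∪ N3) ∪ N4).card := Finset.card_le_card hcover
      _ ≤ ((S₀ \ S₁) ∪ N3).card + N4.card := Finset.card_union_le _ _
      _ ≤ (S₀ \ S₁).card + N3.card + N4.card :=
          Nat.add_le_add_right (Finset.card_union_le _ _) _
  -- now pass to real arithmetic
  have hs0pos : (0 : ℝ) < (S₀.card : ℝ) := by exact_mod_cast Finset.card_pos.2 hS₀ne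
  have hl1 : (1 : ℝ) ≤ (L.card : ℝ) := by exact_mod_cast Finset.card_pos.2 ⟨1, h1L⟩
  have hk31 : (1 : ℝ) ≤ ((K ^ 3 : Finset G).card : ℝ) := by
    exact_mod_cast Finset.card_pos.2 ⟨1, h1K3⟩
  have hm61 : (1 : ℝ) ≤ ((M ^ 6 : Finset G).card : ℝ) := by
    exact_mod_cast Finset.card_pos.2 ⟨1, h1M6⟩
  have hkc1 : (1 : ℝ) ≤ (K.card : ℝ) := by exact_mod_cast Finset.card_pos.2 ⟨1, hK1⟩
  have hk3kc : ((K ^ 3 : Finset G).card : ℝ) ≤ (K.card : ℝ) ^ 3 := by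
    exact_mod_cast Finset.card_pow_le
  have hkc3_6 : ((K.card : ℝ)) ^ 3 ≤ (K.card : ℝ) ^ 6 := pow_le_pow_right₀ hkc1 (by norm_num)
  have hk3kc6 : ((K ^ 3 : Finset G).card : ℝ) ≤ (K.card : ℝ) ^ 6 := hk3kc.trans hkc3_6
  have hePos : (0 : ℝ) ≤ (((L * S₀) \ S₀).card : ℝ) := Nat.cast_nonneg _
  have hcfPos : (0 : ℝ) ≤ (Cfin.card : ℝ) := Nat.cast_nonneg _
  have hlpos : (0 : ℝ) < (L.card : ℝ) := lt_of_lt_of_le one_pos hl1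
  -- N3 real bound
  have hn3 : (N3.card : ℝ) ≤ ((K.card : ℝ) ^ 6 + 3) * ε * S₀.card := by
    have r1 : (N3.card : ℝ) ≤ ((K ^ 3 : Finset G).card : ℝ) *
        (((M ^ 6 : Finset G).card : ℝ) * Cfin.card) := by exact_mod_cast hN3card
    have r2 : (Cfin.card : ℝ) * L.card ≤ (S₀.card : ℝ) +
        ((L.card : ℝ) * ((L.card : ℝ) * (((L * S₀) \ S₀).card : ℝ) + (((L * S₀) \ S₀).card : ℝ))
          + (((L * S₀) \ S₀).card : ℝ)) := by
      have := (hCfinL.trans (Finset.card_le_card hW3)).trans hA3'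
      exact_mod_cast this
    have hml : (0 : ℝ) ≤ ((K ^ 3 : Finset G).card : ℝ) * ((M ^ 6 : Finset G).card : ℝ) := by
      positivity
    -- multiply through by L.card
    rw [← mul_le_mul_iff_of_pos_right hlpos]
    have step1 : (N3.card : ℝ) * L.card ≤ ((K ^ 3 : Finset G).card : ℝ) *
        ((M ^ 6 : Finset G).card : ℝ) * ((Cfin.card : ℝ) * L.card) := by
      nlinarith only [mul_le_mul_of_nonneg_right r1 hlpos.le]
    have step2 : ((K ^ 3 : Finset G).card : ℝ) * ((M ^ 6 : Finset G).card : ℝ) *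
        ((Cfin.card : ℝ) * L.card) ≤ ((K ^ 3 : Finset G).card : ℝ) *
        ((M ^ 6 : Finset G).card : ℝ) * ((S₀.card : ℝ) +
        ((L.card : ℝ) * ((L.card : ℝ) * (((L * S₀) \ S₀).card : ℝ) + (((L * S₀) \ S₀).card : ℝ))
          + (((L * S₀) \ S₀).card : ℝ))) := by
      exact mul_le_mul_of_nonneg_left r2 hml
    have pieceA : ((K ^ 3 : Finset G).card : ℝ) * ((M ^ 6 : Finset G).card : ℝ) * (S₀.card : ℝ)
        ≤ (K.card : ℝ) ^ 6 * ε * L.card * S₀.card := by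
      have hA1 : ((K ^ 3 : Finset G).card : ℝ) * ((M ^ 6 : Finset G).card : ℝ) ≤
          (K.card : ℝ) ^ 6 * (ε * L.card) :=
        mul_le_mul hk3kc6 hM6εL.le (by positivity) (by positivity)
      linarith only [mul_le_mul_of_nonneg_right hA1 hs0pos.le]
    have pieceB : ((K ^ 3 : Finset G).card : ℝ) * ((M ^ 6 : Finset G).card : ℝ) *
        ((L.card : ℝ) * ((L.card : ℝ) * (((L * S₀) \ S₀).card : ℝ) + (((L * S₀) \ S₀).card : ℝ))
          + (((L * S₀) \ S₀).card : ℝ)) ≤ 3 * (ε * S₀.card) * L.card := by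
      have hinner : (L.card : ℝ) * ((L.card : ℝ) * (((L * S₀) \ S₀).card : ℝ)
          + (((L * S₀) \ S₀).card : ℝ)) + (((L * S₀) \ S₀).card : ℝ) ≤
          3 * ((L.card : ℝ) * ((L.card : ℝ) * (((L * S₀) \ S₀).card : ℝ))) := by
        nlinarith only [hl1, hePos, hlpos, mul_nonneg (mul_nonneg hePos hlpos.le) (sub_nonneg.2 hl1),
          mul_nonneg hePos (by nlinarith only [hl1] : (0:ℝ) ≤ (L.card : ℝ) * L.card - 1)]
      have hB1 : ((K ^ 3 : Finset G).card : ℝ) * ((M ^ 6 : Finset G).card : ℝ) *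
          ((L.card : ℝ) * ((L.card : ℝ) * (((L * S₀) \ S₀).card : ℝ) + (((L * S₀) \ S₀).card : ℝ))
            + (((L * S₀) \ S₀).card : ℝ)) ≤ ((K ^ 3 : Finset G).card : ℝ) *
          ((M ^ 6 : Finset G).card : ℝ) *
          (3 * ((L.card : ℝ) * ((L.card : ℝ) * (((L * S₀) \ S₀).card : ℝ)))) :=
        mul_le_mul_of_nonneg_left hinner hml
      have hB3 : 3 * (((K ^ 3 : Finset G).card : ℝ) * ((M ^ 6 : Finset G).card : ℝ) *
          (L.card : ℝ) * (((L * S₀) \ S₀).card : ℝ)) * (L.card : ℝ) ≤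
          3 * (ε * S₀.card) * (L.card : ℝ) := by
        linarith only [mul_le_mul_of_nonneg_right hS₀inv.le hlpos.le]
      linarith only [hB1, hB3]
    linarith only [step1, step2, pieceA, pieceB]
  -- N4 real bound
  have hn4 : (N4.card : ℝ) ≤ (1 + (K.card : ℝ) ^ 6) * ε * S₀.card := by
    have r4 : (N4.card : ℝ) ≤ ((K ^ 3 : Finset G).card : ℝ) *
        ((((L * S₀) \ S₀).card : ℝ) + ((S₀ \ S₁).card : ℝ)) := by exact_mod_cast hN4card
    have p1 : ((K ^ 3 : Finset G).card : ℝ) * (((L * S₀) \ S₀).card : ℝ) ≤ ε * S₀.card := by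
      linarith only [hS₀inv, mul_nonneg (mul_nonneg
          (by positivity : (0:ℝ) ≤ ((K ^ 3 : Finset G).card : ℝ)) hePos)
        (by nlinarith only [hm61, hl1] : (0:ℝ) ≤ ((M ^ 6 : Finset G).card : ℝ) * L.card - 1)]
    have p2 : ((K ^ 3 : Finset G).card : ℝ) * ((S₀ \ S₁).card : ℝ) ≤
        (K.card : ℝ) ^ 6 * (ε * S₀.card) := by
      have hd01 : (0 : ℝ) ≤ ((S₀ \ S₁).card : ℝ) := Nat.cast_nonneg _
      calc ((K ^ 3 : Finset G).card : ℝ) * ((S₀ \ S₁).card : ℝ)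
          ≤ (K.card : ℝ) ^ 6 * ((S₀ \ S₁).card : ℝ) :=
            mul_le_mul_of_nonneg_right hk3kc6 hd01
        _ ≤ (K.card : ℝ) ^ 6 * (ε * S₀.card) :=
            mul_le_mul_of_nonneg_left hS₀S₁.le (by positivity)
    linarith only [r4, p1, p2]
  -- total bound on |S₀ \ Sstar|
  have hdstar : ((S₀ \ Sstar).card : ℝ) ≤ (5 + 4 * (K.card : ℝ) ^ 6) * ε * S₀.card := by
    have r5 : ((S₀ \ Sstar).card : ℝ) ≤ ((S₀ \ S₁).card : ℝ) + N3.card + N4.card := by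
      exact_mod_cast hdstarN
    have hkc6nn : (0 : ℝ) ≤ (K.card : ℝ) ^ 6 := by positivity
    linarith only [r5, hn3, hn4, hS₀S₁, mul_nonneg (mul_nonneg hkc6nn hε.le) hs0pos.le]
  -- pattern-counting inequalities
  have hP2 : (patterns S₂ X).ncard ≤ (patterns S₁ X).ncard * Fintype.card AX ^ (S₂ \ S₁).card :=
    patterns_ncard_le hS₁S₂ X
  have hP1 : (patterns S₁ X).ncard ≤ (patterns S₀ X).ncard := patterns_ncard_mono hS₁S₀ X
  have hPY : (patterns S₀ Y₀).ncard ≤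
      (patterns Sstar Y₀).ncard * Fintype.card AY ^ (S₀ \ Sstar).card :=
    patterns_ncard_le hSstarS0 Y₀
  have ha2pos : (0 : ℝ) < ((patterns S₂ X).ncard : ℝ) := by
    exact_mod_cast patterns_ncard_pos S₂ hXne
  have ha0pos : (0 : ℝ) < ((patterns S₀ X).ncard : ℝ) := by
    exact_mod_cast patterns_ncard_pos S₀ hXne
  have hb0pos : (0 : ℝ) < ((patterns S₀ Y₀).ncard : ℝ) := by
    exact_mod_cast patterns_ncard_pos S₀ hY₀ne
  have hbspos : (0 : ℝ) < ((patterns Sstar Y₀).ncard : ℝ) := by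
    exact_mod_cast patterns_ncard_pos Sstar hY₀ne
  have hcAX1 : (1 : ℝ) ≤ (Fintype.card AX : ℝ) := by exact_mod_cast Fintype.card_pos
  have hcAY1 : (1 : ℝ) ≤ (Fintype.card AY : ℝ) := by exact_mod_cast Fintype.card_pos
  have hlogAX : (0 : ℝ) ≤ Real.log (Fintype.card AX) := Real.log_nonneg hcAX1
  have hlogAY : (0 : ℝ) ≤ Real.log (Fintype.card AY) := Real.log_nonneg hcAY1
  -- X side: log bound
  have hla2 : Real.log ((patterns S₂ X).ncard) ≤ Real.log ((patterns S₀ X).ncard) +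
      ((S₂ \ S₁).card : ℝ) * Real.log (Fintype.card AX) := by
    have h := hP2.trans (Nat.mul_le_mul_right _ hP1)
    have hcast : ((patterns S₂ X).ncard : ℝ) ≤
        ((patterns S₀ X).ncard : ℝ) * (Fintype.card AX : ℝ) ^ (S₂ \ S₁).card := by
      exact_mod_cast h
    calc Real.log ((patterns S₂ X).ncard)
        ≤ Real.log (((patterns S₀ X).ncard : ℝ) * (Fintype.card AX : ℝ) ^ (S₂ \ S₁).card) :=
          Real.log_le_log ha2pos hcast
      _ = Real.log ((patterns S₀ X).ncard) +
          ((S₂ \ S₁).card : ℝ) * Real.log (Fintype.card AX) := by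
          rw [Real.log_mul (ne_of_gt ha0pos) (by positivity), Real.log_pow]
  -- Y side: log bound
  have hlb0 : Real.log ((patterns S₀ Y₀).ncard) ≤ Real.log ((patterns Sstar Y₀).ncard) +
      ((S₀ \ Sstar).card : ℝ) * Real.log (Fintype.card AY) := by
    have hcast : ((patterns S₀ Y₀).ncard : ℝ) ≤
        ((patterns Sstar Y₀).ncard : ℝ) * (Fintype.card AY : ℝ) ^ (S₀ \ Sstar).card := by
      exact_mod_cast hPY
    calc Real.log ((patterns S₀ Y₀).ncard)
        ≤ Real.log (((patterns Sstar Y₀).ncard : ℝ) * (Fintype.card AY : ℝ) ^ (S₀ \ Sstar).card) :=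
          Real.log_le_log hb0pos hcast
      _ = _ := by rw [Real.log_mul (ne_of_gt hbspos) (by positivity), Real.log_pow]
  -- numeric entropy bounds
  have hX0 : Real.log ((patterns S₀ X).ncard) < (S₀.card : ℝ) * (hXe + ε) := by
    rw [div_lt_iff₀ hs0pos] at hS₀X
    linarith only [hS₀X]
  have hY0 : (S₀.card : ℝ) * (hYe - ε) < Real.log ((patterns S₀ Y₀).ncard) := by
    rw [lt_div_iff₀ hs0pos] at hS₀Y
    linarith only [hS₀Y]
  have hs1le : ((S₁.card : ℝ)) ≤ (S₀.card : ℝ) := by exact_mod_cast Finset.card_le_card hS₁S₀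
  have hn2 : ((S₂ \ S₁).card : ℝ) * Real.log (Fintype.card AX) ≤
      3 * ε * S₀.card * Real.log (Fintype.card AX) := by
    apply mul_le_mul_of_nonneg_right _ hlogAX
    have h3e := mul_le_mul_of_nonneg_left hs1le hε.le
    linarith only [hS₂S₁, h3e]
  have hdstarlog : ((S₀ \ Sstar).card : ℝ) * Real.log (Fintype.card AY) ≤
      (5 + 4 * (K.card : ℝ) ^ 6) * ε * S₀.card * Real.log (Fintype.card AY) :=
    mul_le_mul_of_nonneg_right hdstar hlogAY
  -- final chain
  have hfinal : Real.log ((patterns S₂ X).ncard) < Real.log ((patterns Sstar Y₀).ncard) := by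
    have hgap' : (S₀.card : ℝ) * (hXe + ε + 5 * ε * Real.log (Fintype.card AX)) <
        (S₀.card : ℝ) * (hYe - ε - ε * (5 + 4 * (K.card : ℝ) ^ 6) * Real.log (Fintype.card AY)) :=
      mul_lt_mul_of_pos_left hgap hs0pos
    linarith only [hla2, hX0, hn2, hgap', hY0, hlb0, hdstarlog,
      mul_nonneg (mul_nonneg hε.le hs0pos.le) hlogAX]
  have : ((patterns S₂ X).ncard : ℝ) < ((patterns Sstar Y₀).ncard : ℝ) :=
    (Real.log_lt_log_iff ha2pos hbspos).1 hfinal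
  exact_mod_cast this
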